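/- Peetre–Tartar lemma: let X, Y, Z be Banach spaces, A : X → Y a continuous injective linear map, T : X → Z a compact linear map, and suppose ‖x‖_X ≤ C(‖Ax‖_Y + ‖Tx‖_Z) for all x ∈ X; then there exists C' > 0 with ‖x‖_X ≤ C'‖Ax‖_Y for all x ∈ X. -/
import Mathlib


/-- Peetre–Tartar lemma: if `X, Y, Z` are Banach spaces, `A : X → Y` is a continuous
injective linear map, `T : X → Z` is a compact linear operator, and
`‖x‖ ≤ C(‖Ax‖ + ‖Tx‖)` for all `x`, then there is `C' > 0` with `‖x‖ ≤ C'‖Ax‖` for all `x`. -/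
theorem peetre_tartar
    {X Y Z : Type*}
    [NormedAddCommGroup X] [NormedSpace ℝ X] [CompleteSpace X]
    [NormedAddCommGroup Y] [NormedSpace ℝ Y] [CompleteSpace Y]
    [NormedAddCommGroup Z] [NormedSpace ℝ Z] [CompleteSpace Z]
    (A : X →L[ℝ] Y) (T : X →L[ℝ] Z)
    (hA : Function.Injective A) (hT : IsCompactOperator T)
    (C : ℝ) (hbound : ∀ x, ‖x‖ ≤ C * (‖A x‖ + ‖T x‖)) :
    ∃ C' > 0, ∀ x, ‖x‖ ≤ C' * ‖A x‖ := by
  by_contra h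
  push_neg at h
  -- extract a sequence of unit vectors with ‖A uₙ‖ small
  have hx : ∀ n : ℕ, ∃ x : X, ((n : ℝ) + 1) * ‖A x‖ < ‖x‖ := fun n =>
    h ((n : ℝ) + 1) (by positivity)
  choose x hxlt using hx
  have hxne : ∀ n, x n ≠ 0 := by
    intro n hn
    have := hxlt n
    rw [hn] at this
    simp at this
  set u : ℕ → X := fun n => ‖x n‖⁻¹ • x n with hu
  have hun : ∀ n, ‖u n‖ = 1 := by
    intro n
    rw [hu]
    simp [norm_smul, abs_of_nonneg (inv_nonneg.2 (norm_nonneg (x n)))]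
    rw [inv_mul_cancel₀ (norm_ne_zero_iff.2 (hxne n))]
  have hAun : ∀ n, ‖A (u n)‖ < 1 / ((n : ℝ) + 1) := by
    intro n
    have hxpos : (0 : ℝ) < ‖x n‖ := norm_pos_iff.2 (hxne n)
    have : A (u n) = ‖x n‖⁻¹ • A (x n) := by simp [hu]
    rw [this, norm_smul]
    rw [div_eq_mul_inv, one_mul]
    have h1 : ‖A (x n)‖ < ‖x n‖ / ((n : ℝ) + 1) := by
      rw [lt_div_iff₀ (by positivity)]
      nlinarith [hxlt n]
    calc ‖(‖x n‖⁻¹ : ℝ)‖ * ‖A (x n)‖ = ‖x n‖⁻¹ * ‖A (x n)‖ := by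
          rw [norm_inv, norm_norm]
      _ < ‖x n‖⁻¹ * (‖x n‖ / ((n : ℝ) + 1)) := by
          apply mul_lt_mul_of_pos_left h1 (by positivity)
      _ = ((n : ℝ) + 1)⁻¹ := by field_simp
  -- C > 0
  have hC : 0 < C := by
    have h0 := hbound (u 0)
    rw [hun 0] at h0
    nlinarith [norm_nonneg (A (u 0)), norm_nonneg (T (u 0))]
  -- compactness: T uₙ has a convergent subsequence
  obtain ⟨K, hK, hKsub⟩ := hT.image_closedBall_subset_compact (𝕜₁ := ℝ) 1
  have hmem : ∀ n, T (u n) ∈ K := by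
    intro n
    apply hKsub
    exact ⟨u n, by simp [Metric.mem_closedBall, (hun n).le], rfl⟩
  obtain ⟨z, _, φ, hφ, hTz⟩ := hK.tendsto_subseq hmem
  set v : ℕ → X := fun n => u (φ n) with hv
  -- A ∘ v tends to 0
  have hAv : Filter.Tendsto (fun n => A (v n)) Filter.atTop (nhds 0) := by
    rw [tendsto_zero_iff_norm_tendsto_zero]
    apply squeeze_zero (fun n => norm_nonneg _) (fun n => (hAun (φ n)).le)
    have h1 : Filter.Tendsto (fun n : ℕ => 1 / ((n : ℝ) + 1)) Filter.atTop (nhds 0) :=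
      tendsto_one_div_add_atTop_nhds_zero_nat
    exact h1.comp hφ.tendsto_atTop
  -- v is Cauchy
  have hvC : CauchySeq v := by
    have hAc : CauchySeq (fun n => A (v n)) := hAv.cauchySeq
    have hTc : CauchySeq (fun n => T (v n)) := hTz.cauchySeq
    rw [Metric.cauchySeq_iff] at hAc hTc ⊢
    intro ε hε
    obtain ⟨N₁, hN₁⟩ := hAc (ε / (2 * C)) (by positivity)
    obtain ⟨N₂, hN₂⟩ := hTc (ε / (2 * C)) (by positivity)
    refine ⟨max N₁ N₂, fun m hm n hn => ?_⟩
    have h1 := hN₁ m (le_trans (le_max_left _ _) hm) n (le_trans (le_max_left _ _) hn)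
    have h2 := hN₂ m (le_trans (le_max_right _ _) hm) n (le_trans (le_max_right _ _) hn)
    have hb := hbound (v m - v n)
    rw [map_sub, map_sub] at hb
    rw [dist_eq_norm] at h1 h2 ⊢
    calc ‖v m - v n‖ ≤ C * (‖A (v m) - A (v n)‖ + ‖T (v m) - T (v n)‖) := hb
      _ < C * (ε / (2 * C) + ε / (2 * C)) := by
          apply mul_lt_mul_of_pos_left (by linarith) hC
      _ = ε := by field_simp; ring
  obtain ⟨w, hw⟩ := cauchySeq_tendsto_of_complete hvC
  have hwn : ‖w‖ = 1 := by
    have : Filter.Tendsto (fun n => ‖v n‖) Filter.atTop (nhds ‖w‖) := hw.norm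
    have h1 : (fun n => ‖v n‖) = fun _ => (1 : ℝ) := funext fun n => hun (φ n)
    rw [h1] at this
    exact (tendsto_const_nhds_iff.1 this).symm
  have hAw : A w = 0 := by
    have h1 : Filter.Tendsto (fun n => A (v n)) Filter.atTop (nhds (A w)) :=
      (A.continuous.tendsto w).comp hw
    exact tendsto_nhds_unique h1 hAv
  have : w = 0 := hA (by simp [hAw])
  rw [this] at hwn
  simp at hwn
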